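/- arXiv:2605.05102 — 3 statements merged into one kernel-verified Lean document; each statement's English description precedes it below -/
import Mathlib

section
/- Let X be a real-valued random variable with X ≤ 1 almost surely and E[X] ≤ 0. Then for every λ ≥ 0, E[exp(λX)] ≤ exp((e^λ - 1 - λ)·Var(X)). -/
open MeasureTheory ProbabilityTheory Real

/-- Integral representation of `(exp t - 1 - t)/t^2`. -/
lemma subpoisson_integral_rep (t : ℝ) (ht : t ≠ 0) :
    ∫ u in (0:ℝ)..1, (1 - u) * Real.exp (t * u) = (Real.exp t - 1 - t) / t ^ 2 := by
  have hF : ∀ u : ℝ, HasDerivAt (fun u : ℝ => Real.exp (t * u) * ((t + 1) / t ^ 2 - u / t))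
      ((1 - u) * Real.exp (t * u)) u := by
    intro u
    have h1 : HasDerivAt (fun u : ℝ => t * u) t u := by
      simpa using (hasDerivAt_id u).const_mul t
    have h2 : HasDerivAt (fun u : ℝ => Real.exp (t * u)) (Real.exp (t * u) * t) u := h1.exp
    have h3 : HasDerivAt (fun u : ℝ => (t + 1) / t ^ 2 - u / t) (-(1 / t)) u := by
      simpa using ((hasDerivAt_id u).div_const t).const_sub ((t + 1) / t ^ 2)
    have h4 := h2.mul h3
    refine h4.congr_deriv ?_
    field_simp
    ring
  rw [intervalIntegral.integral_eq_sub_of_hasDerivAt (fun u _ => hF u)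
    (by apply Continuous.intervalIntegrable; continuity)]
  simp only [mul_one, mul_zero, Real.exp_zero, zero_div]
  field_simp
  ring

/-- Monotonicity of `(exp t - 1 - t)/t²`, in cleared-denominator form. -/
lemma subpoisson_key1 {t T : ℝ} (h : t ≤ T) :
    (Real.exp t - 1 - t) * T ^ 2 ≤ (Real.exp T - 1 - T) * t ^ 2 := by
  rcases eq_or_ne t 0 with rfl | ht
  · simp
  rcases eq_or_ne T 0 with rfl | hT
  · simp
  have hmono : ∫ u in (0:ℝ)..1, (1 - u) * Real.exp (t * u)
      ≤ ∫ u in (0:ℝ)..1, (1 - u) * Real.exp (T * u) := by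
    apply intervalIntegral.integral_mono_on (by norm_num)
      (by apply Continuous.intervalIntegrable; continuity)
      (by apply Continuous.intervalIntegrable; continuity)
    intro u hu
    rcases hu with ⟨hu0, hu1⟩
    have h1u : 0 ≤ 1 - u := by linarith
    have : Real.exp (t * u) ≤ Real.exp (T * u) := by
      apply Real.exp_le_exp.2
      nlinarith
    nlinarith [Real.exp_pos (t * u)]
  rw [subpoisson_integral_rep t ht, subpoisson_integral_rep T hT] at hmono
  rw [div_le_div_iff₀ (by positivity) (by positivity)] at hmono
  linarith

/-- Key scalar inequality: `exp (-(l*a)) * g(l*(1+a)) ≤ (1+a)^2 * g l` for `l, a ≥ 0`. -/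
lemma subpoisson_key2 {l a : ℝ} (hl : 0 ≤ l) (ha : 0 ≤ a) :
    Real.exp (-(l * a)) * (Real.exp (l * (1 + a)) - 1 - l * (1 + a))
      ≤ (1 + a) ^ 2 * (Real.exp l - 1 - l) := by
  set g : ℝ := Real.exp l - 1 - l with hg
  -- F x = (1+x)^2 * g - exp l + exp(-(l*x)) * (1 + l + l*x)
  set F : ℝ → ℝ := fun x => (1 + x) ^ 2 * g - Real.exp l + Real.exp (-(l * x)) * (1 + l + l * x)
    with hF
  have hderiv : ∀ x : ℝ, HasDerivAt F ((1 + x) * (2 * g - l ^ 2 * Real.exp (-(l * x)))) x := by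
    intro x
    have h1 : HasDerivAt (fun x : ℝ => -(l * x)) (-l) x := by
      have := ((hasDerivAt_id x).const_mul l).neg; simp only [mul_one] at this; exact this
    have h2 : HasDerivAt (fun x : ℝ => Real.exp (-(l * x))) (Real.exp (-(l * x)) * (-l)) x :=
      h1.exp
    have h3 : HasDerivAt (fun x : ℝ => 1 + l + l * x) l x := by
      simpa using ((hasDerivAt_id x).const_mul l).const_add (1 + l)
    have h4 := h2.mul h3
    have h5 : HasDerivAt (fun x : ℝ => (1 + x) ^ 2) (2 * (1 + x)) x := by
      have := ((hasDerivAt_id x).const_add 1).pow 2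
      exact this.congr_deriv (by simp)
    have h6 := ((h5.mul_const g).sub_const (Real.exp l)).add h4
    refine h6.congr_deriv ?_
    ring
  have hl2 : l ^ 2 ≤ 2 * g := by
    have := Real.sum_le_exp_of_nonneg hl 3
    simp [Finset.sum_range_succ] at this
    rw [hg]
    nlinarith
  have hmono : MonotoneOn F (Set.Ici (0:ℝ)) := by
    apply monotoneOn_of_deriv_nonneg (convex_Ici 0)
      (fun x _ => (hderiv x).differentiableAt.continuousAt.continuousWithinAt)
      (fun x _ => (hderiv x).differentiableAt.differentiableWithinAt)
    intro x hx
    rw [interior_Ici] at hx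
    rw [(hderiv x).deriv]
    have hx0 : (0:ℝ) < x := hx
    have he : Real.exp (-(l * x)) ≤ 1 := by
      apply Real.exp_le_one_iff.2
      nlinarith
    have : l ^ 2 * Real.exp (-(l * x)) ≤ 2 * g := by
      nlinarith [sq_nonneg l, Real.exp_pos (-(l * x))]
    nlinarith
  have hF0 : F 0 = 0 := by
    simp [hF, hg]
    ring
  have hFa : 0 ≤ F a := by
    rw [← hF0]
    exact hmono (by simp) (by exact ha) ha
  have hexp : Real.exp (-(l * a)) * Real.exp (l * (1 + a)) = Real.exp l := by
    rw [← Real.exp_add]; ring_nf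
  have expand : Real.exp (-(l * a)) * (Real.exp (l * (1 + a)) - 1 - l * (1 + a))
      = Real.exp l - Real.exp (-(l * a)) * (1 + l + l * a) := by
    rw [mul_sub, mul_sub, hexp]; ring
  rw [expand]
  have := hFa
  rw [hF] at this
  simp only at this
  linarith

theorem subpoisson_mgf_bound {Ω : Type*} [MeasureSpace Ω]
    [IsProbabilityMeasure (ℙ : Measure Ω)]
    (X : Ω → ℝ) (hX : Measurable X) (hXle : ∀ᵐ ω ∂ℙ, X ω ≤ 1)
    (hL2 : MemLp X 2 ℙ) (hmean : ∫ ω, X ω ∂ℙ ≤ 0) :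
    ∀ l : ℝ, 0 ≤ l →
      ∫ ω, Real.exp (l * X ω) ∂ℙ ≤
        Real.exp ((Real.exp l - 1 - l) * variance X ℙ) := by
  intro l hl0
  rcases hl0.eq_or_lt with rfl | hl
  · simp
  set μ : ℝ := ∫ ω, X ω ∂ℙ with hμ
  set V : ℝ := variance X ℙ with hV
  have hVnn : 0 ≤ V := variance_nonneg X ℙ
  set b : ℝ := 1 - μ with hb
  have hb1 : 1 ≤ b := by simp [hb]; linarith
  have hb0 : 0 < b := by linarith
  set g : ℝ := Real.exp l - 1 - l with hg
  set c : ℝ := Real.exp (l * μ) * (Real.exp (l * b) - 1 - l * b) / b ^ 2 with hc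
  -- nonnegativity of g-type expressions
  have gnn : ∀ t : ℝ, 0 ≤ Real.exp t - 1 - t := fun t => by
    nlinarith [Real.add_one_le_exp t]
  have hcnn : 0 ≤ c := by
    apply div_nonneg _ (by positivity)
    exact mul_nonneg (Real.exp_pos _).le (gnn _)
  -- integrability
  have hXint : Integrable X ℙ := hL2.integrable one_le_two
  have hsqint : Integrable (fun ω => (X ω - μ) ^ 2) ℙ := by
    have := (hL2.sub (memLp_const μ)).integrable_sq
    simpa using this
  have hexpint : Integrable (fun ω => Real.exp (l * X ω)) ℙ := by
    refine ⟨(Real.measurable_exp.comp (hX.const_mul l)).aestronglyMeasurable, ?_⟩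
    apply HasFiniteIntegral.of_bounded (C := Real.exp l)
    filter_upwards [hXle] with ω hω
    rw [Real.norm_eq_abs, abs_of_pos (Real.exp_pos _)]
    apply Real.exp_le_exp.2
    nlinarith
  have hRHSint : Integrable (fun ω =>
      Real.exp (l * μ) + Real.exp (l * μ) * l * (X ω - μ) + c * (X ω - μ) ^ 2) ℙ := by
    apply Integrable.add
    · exact (integrable_const _).add (((hXint.sub (integrable_const μ)).const_mul _))
    · exact hsqint.const_mul c
  -- pointwise bound
  have hpt : ∀ᵐ ω ∂ℙ, Real.exp (l * X ω) ≤
      Real.exp (l * μ) + Real.exp (l * μ) * l * (X ω - μ) + c * (X ω - μ) ^ 2 := by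
    filter_upwards [hXle] with ω hω
    set u : ℝ := X ω - μ with hu
    have hub : u ≤ b := by simp [hu, hb]; linarith
    have hkey := subpoisson_key1 (t := l * u) (T := l * b)
      (by nlinarith)
    -- g(l*u) ≤ g(l*b) * u^2 / b^2
    have h2 : Real.exp (l * u) - 1 - l * u ≤ (Real.exp (l * b) - 1 - l * b) * u ^ 2 / b ^ 2 := by
      rw [le_div_iff₀ (by positivity)]
      have hl2 : (0:ℝ) < l ^ 2 := by positivity
      nlinarith [hkey]
    have hxsplit : l * X ω = l * μ + l * u := by rw [hu]; ring
    have hepos : (0:ℝ) < Real.exp (l * μ) := Real.exp_pos _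
    calc Real.exp (l * X ω) = Real.exp (l * μ) * Real.exp (l * u) := by
          rw [hxsplit, Real.exp_add]
      _ ≤ Real.exp (l * μ) * (1 + l * u + (Real.exp (l * b) - 1 - l * b) * u ^ 2 / b ^ 2) := by
          apply mul_le_mul_of_nonneg_left _ hepos.le
          nlinarith [h2]
      _ = Real.exp (l * μ) + Real.exp (l * μ) * l * u + c * u ^ 2 := by
          rw [hc]; field_simp
  -- integrate
  have hint : ∫ ω, Real.exp (l * X ω) ∂ℙ ≤ Real.exp (l * μ) + c * V := by
    have := integral_mono_ae hexpint hRHSint hpt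
    refine this.trans_eq ?_
    rw [integral_add, integral_add, integral_const, integral_const_mul, integral_const_mul,
      integral_sub hXint (integrable_const μ), integral_const]
    · have hvar : ∫ ω, (X ω - μ) ^ 2 ∂ℙ = V := by
        have h := variance_eq_integral (μ := (ℙ : Measure Ω)) hL2.aemeasurable
        rw [hV, h]
      rw [hvar]
      simp only [measure_univ, probReal_univ, ENNReal.toReal_one, one_smul, ← hμ]
      ring
    · exact integrable_const _
    · exact (by simpa using (hXint.sub (integrable_const μ)).const_mul (Real.exp (l * μ) * l) :
        Integrable (fun a => Real.exp (l * μ) * l * (X a - μ)) ℙ)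
    · exact (integrable_const _).add (by simpa using
        (hXint.sub (integrable_const μ)).const_mul (Real.exp (l * μ) * l))
    · exact (by simpa using hsqint.const_mul c : Integrable (fun a => c * (X a - μ) ^ 2) ℙ)
  -- final scalar chain
  have hcle : c ≤ g := by
    have hkey2 := subpoisson_key2 (l := l) (a := -μ) hl.le (by linarith [hmean])
    have h1a : 1 + -μ = b := by rw [hb]; ring
    have hexpeq : Real.exp (-(l * -μ)) = Real.exp (l * μ) := by ring_nf
    rw [h1a, hexpeq] at hkey2
    rw [hc, div_le_iff₀ (by positivity), hg]
    nlinarith [hkey2]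
  have hexpμ : Real.exp (l * μ) ≤ 1 := by
    apply Real.exp_le_one_iff.2
    nlinarith [hmean]
  calc ∫ ω, Real.exp (l * X ω) ∂ℙ ≤ Real.exp (l * μ) + c * V := hint
    _ ≤ 1 + g * V := by
        have : c * V ≤ g * V := mul_le_mul_of_nonneg_right hcle hVnn
        linarith
    _ ≤ Real.exp (g * V) := by nlinarith [Real.add_one_le_exp (g * V)]
end

section
/- Let {X_t} be a martingale difference sequence adapted to {F_t} with |X_t| ≤ c almost surely for a constant c ≥ 0. Then for any λ ∈ (0, 1/c] and δ ∈ (0,1], with probability at least 1-δ, for all n ∈ ℕ simultaneously, Σ_{t=1}^n X_t < (e-2)·λ·Σ_{t=1}^n Var(X_t | F_{t-1}) + (1/λ)·log(1/δ). -/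
open MeasureTheory ProbabilityTheory Real

section helpers
open Nat in
lemma exp_le_quad {x : ℝ} (hx : |x| ≤ 1) :
    Real.exp x ≤ 1 + x + (Real.exp 1 - 2) * x ^ 2 := by
  have hexp : ∀ y : ℝ, Real.exp y = ∑' n : ℕ, y ^ n / (n ! : ℝ) := fun y => by
    rw [Real.exp_eq_exp_ℝ, NormedSpace.exp_eq_tsum_div]
  have hsm : ∀ y : ℝ, Summable (fun n : ℕ => y ^ n / (n ! : ℝ)) :=
    Real.summable_pow_div_factorial
  have hsplit : ∀ y : ℝ,
      Real.exp y = 1 + y + ∑' n : ℕ, y ^ (n + 2) / ((n+2)! : ℝ) := by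
    intro y
    rw [hexp y, Summable.tsum_eq_zero_add (hsm y),
      Summable.tsum_eq_zero_add ((summable_nat_add_iff 1).2 (hsm y))]
    norm_num [add_assoc]
  have h1 : Real.exp 1 - 2 = ∑' n : ℕ, (1 : ℝ) ^ (n + 2) / ((n+2)! : ℝ) := by
    rw [hsplit 1]; ring
  have hle : ∑' n : ℕ, x ^ (n + 2) / ((n+2)! : ℝ)
      ≤ ∑' n : ℕ, x ^ 2 * ((1 : ℝ) ^ (n + 2) / ((n+2)! : ℝ)) := by
    refine Summable.tsum_le_tsum (fun n => ?_) ((summable_nat_add_iff 2).2 (hsm x))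
      (((summable_nat_add_iff 2).2 (hsm 1)).mul_left _)
    rw [one_pow, mul_one_div]
    refine div_le_div_of_nonneg_right ?_ (by positivity)
    calc x ^ (n + 2) ≤ |x ^ (n + 2)| := le_abs_self _
      _ = |x| ^ n * |x| ^ 2 := by rw [abs_pow, pow_add]
      _ ≤ 1 * |x| ^ 2 := by
          have : |x| ^ n ≤ 1 := pow_le_one₀ (abs_nonneg x) hx
          nlinarith [sq_nonneg x, sq_abs x, abs_nonneg x]
      _ = x ^ 2 := by rw [one_mul, sq_abs]
  rw [hsplit x, h1, tsum_mul_left] at *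
  linarith [hle]


lemma ville_ineq {Ω : Type*} {m0 : MeasurableSpace Ω} {μ : Measure Ω} [IsProbabilityMeasure μ]
    {𝒢 : Filtration ℕ m0} {f : ℕ → Ω → ℝ}
    (hf : Supermartingale f 𝒢 μ) (hnn : ∀ n ω, 0 ≤ f n ω) {ε : ℝ} (hε : 0 < ε) :
    μ {ω | ∃ k, ε ≤ f k ω} ≤ ENNReal.ofReal ((∫ ω, f 0 ω ∂μ) / ε) := by
  set A : ℕ → Set Ω := fun n => {ω | ∃ k ≤ n, ε ≤ f k ω} with hA
  have hAmeas : ∀ n, MeasurableSet (A n) := by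
    intro n
    have : A n = ⋃ k, ⋃ _ : k ≤ n, {ω | ε ≤ f k ω} := by
      ext ω; simp [hA]
    rw [this]
    exact MeasurableSet.iUnion fun k => MeasurableSet.iUnion fun _ =>
      measurableSet_le measurable_const
        ((hf.stronglyMeasurable k).measurable.le (𝒢.le k))
  have hmono : Monotone A := fun a b hab ω ⟨k, hk, hfk⟩ => ⟨k, hk.trans hab, hfk⟩
  have hU : {ω | ∃ k, ε ≤ f k ω} = ⋃ n, A n := by
    ext ω
    constructor
    · rintro ⟨k, hk⟩; exact Set.mem_iUnion.2 ⟨k, k, le_rfl, hk⟩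
    · rintro h
      obtain ⟨n, k, _, hk⟩ := Set.mem_iUnion.1 h
      exact ⟨k, hk⟩
  have key : ∀ n, μ (A n) ≤ ENNReal.ofReal ((∫ ω, f 0 ω ∂μ) / ε) := by
    intro n
    set τ : Ω → WithTop ℕ := fun ω => (hittingBtwn f (Set.Ici ε) 0 n ω : ℕ) with hτdef
    have hτ : IsStoppingTime 𝒢 τ := hittingBtwn_isStoppingTime hf.stronglyAdapted.adapted measurableSet_Ici
    have hτle : ∀ ω, τ ω ≤ n := fun ω => WithTop.coe_le_coe.2 (hittingBtwn_le ω)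
    have hneg : stoppedValue (-f) τ = -stoppedValue f τ := rfl
    have hsv_int : Integrable (stoppedValue f τ) μ := by
      have := (hf.neg.integrable_stoppedValue hτ hτle)
      rw [hneg] at this
      exact (neg_neg (stoppedValue f τ)) ▸ this.neg
    have hsv_ge : ∀ ω ∈ A n, ε ≤ stoppedValue f τ ω := by
      rintro ω ⟨k, hk, hfk⟩
      exact stoppedValue_hittingBtwn_mem ⟨k, ⟨Nat.zero_le _, hk⟩, hfk⟩
    have hE : ∫ ω, stoppedValue f τ ω ∂μ ≤ ∫ ω, f 0 ω ∂μ := by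
      have h := hf.neg.expected_stoppedValue_mono (isStoppingTime_const 𝒢 0) hτ
        (fun ω => WithTop.coe_le_coe.2 (Nat.zero_le _)) hτle
      rw [hneg] at h
      have h0 : stoppedValue (-f) (fun _ => ((0 : ℕ) : WithTop ℕ)) = -(f 0) := rfl
      rw [stoppedValue_const] at h
      simp only [Pi.neg_apply, integral_neg] at h
      linarith
    have h1 := setIntegral_ge_of_const_le (hAmeas n) (measure_ne_top μ _) hsv_ge
      hsv_int.integrableOn
    have h2 : ∫ ω in A n, stoppedValue f τ ω ∂μ ≤ ∫ ω, stoppedValue f τ ω ∂μ :=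
      setIntegral_le_integral hsv_int (Filter.Eventually.of_forall fun ω => hnn _ ω)
    rw [ENNReal.le_ofReal_iff_toReal_le (measure_ne_top μ _)
      (div_nonneg (le_trans (by positivity) (h1.trans (h2.trans hE))) hε.le)]
    rw [le_div_iff₀ hε, mul_comm]
    simpa [Measure.real, smul_eq_mul, mul_comm] using h1.trans (h2.trans hE)
  rw [hU, (hmono.directed_le).measure_iUnion]
  exact iSup_le key

end helpers

theorem freedman_time_uniform
    {Ω : Type*} {m0 : MeasurableSpace Ω} {μ : Measure Ω} [IsProbabilityMeasure μ]
    (ℱ : Filtration ℕ m0) (X : ℕ → Ω → ℝ) (c : ℝ) (hc : 0 ≤ c)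
    (hadapted : StronglyAdapted ℱ X)
    (hbdd : ∀ t, ∀ᵐ ω ∂μ, |X t ω| ≤ c)
    (hmds : ∀ t ≥ 1, μ[X t | ℱ (t - 1)] =ᵐ[μ] 0) :
    ∀ l : ℝ, 0 < l → l ≤ 1 / c → ∀ δ : ℝ, δ ∈ Set.Ioc (0 : ℝ) 1 →
      ENNReal.ofReal (1 - δ) ≤
        μ {ω | ∀ n : ℕ, ∑ t ∈ Finset.Icc 1 n, X t ω <
          (Real.exp 1 - 2) * l *
            ∑ t ∈ Finset.Icc 1 n, (μ[fun ω' => (X t ω') ^ 2 | ℱ (t - 1)]) ω +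
            (1 / l) * Real.log (1 / δ)} := by
  intro l hl hlc δ hδ
  obtain ⟨hδ0, hδ1⟩ := hδ
  have hlc1 : l * c ≤ 1 := by
    rcases eq_or_lt_of_le hc with h | h
    · simp [← h]
    · exact (le_div_iff₀ h).1 hlc
  set e2 : ℝ := Real.exp 1 - 2 with he2
  have he2pos : 0 < e2 := by
    have := Real.exp_one_gt_d9
    rw [he2]; norm_num at this ⊢; linarith
  set S : ℕ → Ω → ℝ := fun n ω => ∑ t ∈ Finset.Icc 1 n, X t ω with hS
  set V : ℕ → Ω → ℝ :=
    fun n ω => ∑ t ∈ Finset.Icc 1 n, (μ[fun ω' => (X t ω') ^ 2 | ℱ (t - 1)]) ω with hV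
  set M : ℕ → Ω → ℝ := fun n ω => Real.exp (l * S n ω - e2 * l ^ 2 * V n ω) with hM
  -- measurability
  have hSm : ∀ n, StronglyMeasurable[ℱ n] (S n) := by
    intro n
    apply Finset.stronglyMeasurable_fun_sum
    intro t ht
    exact (hadapted t).mono (ℱ.mono (Finset.mem_Icc.1 ht).2)
  have hVm : ∀ n, StronglyMeasurable[ℱ n] (V n) := by
    intro n
    apply Finset.stronglyMeasurable_fun_sum
    intro t ht
    exact stronglyMeasurable_condExp.mono
      (ℱ.mono (le_trans (Nat.sub_le t 1) (Finset.mem_Icc.1 ht).2))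
  have hMm : ∀ n, StronglyMeasurable[ℱ n] (M n) := by
    intro n
    exact (Real.continuous_exp.comp_stronglyMeasurable
      (((hSm n).const_mul l).sub ((hVm n).const_mul (e2 * l ^ 2))))
  -- a.e. bounds
  have hXa : ∀ᵐ ω ∂μ, ∀ t, |X t ω| ≤ c := (ae_all_iff).2 hbdd
  have hVnn : ∀ᵐ ω ∂μ, ∀ t : ℕ, 0 ≤ (μ[fun ω' => (X t ω') ^ 2 | ℱ (t - 1)]) ω :=
    (ae_all_iff).2 fun t => condExp_nonneg (Filter.Eventually.of_forall fun ω => sq_nonneg _)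
  have hMb : ∀ n, ∀ᵐ ω ∂μ, ‖M n ω‖ ≤ Real.exp n := by
    intro n
    filter_upwards [hXa, hVnn] with ω hX hVn
    rw [Real.norm_eq_abs, abs_of_pos (Real.exp_pos _), Real.exp_le_exp]
    have hSb : |S n ω| ≤ n * c := by
      calc |S n ω| ≤ ∑ t ∈ Finset.Icc 1 n, |X t ω| := Finset.abs_sum_le_sum_abs _ _
        _ ≤ ∑ t ∈ Finset.Icc 1 n, c := Finset.sum_le_sum fun t _ => hX t
        _ = n * c := by rw [Finset.sum_const, Nat.card_Icc]; simp
    have hVb : 0 ≤ V n ω := Finset.sum_nonneg fun t _ => hVn t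
    have h1 : l * S n ω ≤ l * (n * c) :=
      mul_le_mul_of_nonneg_left (le_trans (le_abs_self _) hSb) hl.le
    have h2 : l * (n * c) ≤ n := by
      calc l * (n * c) = n * (l * c) := by ring
        _ ≤ n * 1 := mul_le_mul_of_nonneg_left hlc1 (Nat.cast_nonneg n)
        _ = n := mul_one _
    nlinarith [mul_nonneg (mul_nonneg he2pos.le (sq_nonneg l)) hVb]
  have hMint : ∀ n, Integrable (M n) μ := by
    intro n
    exact Integrable.mono' (integrable_const (Real.exp n))
      ((hMm n).mono (ℱ.le n)).aestronglyMeasurable (hMb n)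
  have hXint : ∀ t, Integrable (X t) μ := by
    intro t
    refine Integrable.mono' (integrable_const c)
      ((hadapted t).mono (ℱ.le t)).aestronglyMeasurable ?_
    filter_upwards [hbdd t] with ω h using by rwa [Real.norm_eq_abs]
  have hX2int : ∀ t, Integrable (fun ω => (X t ω) ^ 2) μ := by
    intro t
    refine Integrable.mono' (integrable_const (c ^ 2))
      (((hadapted t).mono (ℱ.le t)).pow 2).aestronglyMeasurable ?_
    filter_upwards [hbdd t] with ω h
    rw [Real.norm_eq_abs, abs_pow]
    exact pow_le_pow_left₀ (abs_nonneg _) h 2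
  -- supermartingale step
  have hstep : ∀ n, μ[M (n + 1) | ℱ n] ≤ᵐ[μ] M n := by
    intro n
    set d : ℝ := e2 * l ^ 2 with hd
    have hdnn : 0 ≤ d := by positivity
    set g : Ω → ℝ := μ[fun ω' => (X (n + 1) ω') ^ 2 | ℱ n] with hg
    set A : Ω → ℝ := fun ω => M n ω * Real.exp (-d * g ω) with hA
    set h : Ω → ℝ := fun ω => Real.exp (l * X (n + 1) ω) with hh
    have h11 : (1:ℕ) ≤ n + 1 := Nat.succ_le_succ (Nat.zero_le n)
    have hdecomp : M (n + 1) = A * h := by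
      funext ω
      show Real.exp (l * S (n+1) ω - d * V (n+1) ω) = A ω * h ω
      have hSs : S (n + 1) ω = S n ω + X (n + 1) ω := Finset.sum_Icc_succ_top h11 _
      have hVs : V (n + 1) ω = V n ω + g ω := Finset.sum_Icc_succ_top h11 _
      simp only [hA, hh, hM]
      rw [hSs, hVs, ← Real.exp_add, ← Real.exp_add]
      congr 1
      ring
    have hAm : StronglyMeasurable[ℱ n] A :=
      (hMm n).mul (Real.continuous_exp.comp_stronglyMeasurable
        (stronglyMeasurable_condExp.const_mul (-d)))
    have hApos : ∀ ω, 0 ≤ A ω := fun ω =>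
      mul_nonneg (Real.exp_pos _).le (Real.exp_pos _).le
    have hgnn : 0 ≤ᵐ[μ] g :=
      condExp_nonneg (Filter.Eventually.of_forall fun ω => sq_nonneg _)
    have hAb : ∀ᵐ ω ∂μ, ‖A ω‖ ≤ Real.exp n := by
      filter_upwards [hMb n, hgnn] with ω h1 h2
      rw [Real.norm_eq_abs, abs_of_nonneg (hApos ω)]
      have he1 : Real.exp (-d * g ω) ≤ 1 := by
        rw [Real.exp_le_one_iff]
        have : 0 ≤ d * g ω := mul_nonneg hdnn h2
        linarith
      calc A ω ≤ M n ω * 1 :=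
            mul_le_mul_of_nonneg_left he1 (Real.exp_pos _).le
        _ = M n ω := mul_one _
        _ ≤ Real.exp n := le_trans (le_abs_self _) (by rwa [Real.norm_eq_abs] at h1)
    have hlXb : ∀ᵐ ω ∂μ, |l * X (n + 1) ω| ≤ 1 := by
      filter_upwards [hbdd (n + 1)] with ω hω
      rw [abs_mul, abs_of_pos hl]
      calc l * |X (n + 1) ω| ≤ l * c := mul_le_mul_of_nonneg_left hω hl.le
        _ ≤ 1 := hlc1
    have hXm0 : AEStronglyMeasurable (X (n + 1)) μ :=
      ((hadapted (n + 1)).mono (ℱ.le _)).aestronglyMeasurable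
    have hhm : AEStronglyMeasurable h μ :=
      (Real.continuous_exp.comp_aestronglyMeasurable (hXm0.const_mul l))
    have hhb : ∀ᵐ ω ∂μ, ‖h ω‖ ≤ Real.exp 1 := by
      filter_upwards [hlXb] with ω hω
      rw [Real.norm_eq_abs, abs_of_pos (Real.exp_pos _), Real.exp_le_exp]
      exact le_trans (le_abs_self _) hω
    have hh_int : Integrable h μ := Integrable.mono' (integrable_const _) hhm hhb
    have hAm0 : AEStronglyMeasurable A μ := (hAm.mono (ℱ.le n)).aestronglyMeasurable
    have hAh_int : Integrable (A * h) μ := by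
      refine Integrable.mono' (integrable_const (Real.exp n * Real.exp 1))
        (hAm0.mul hhm) ?_
      filter_upwards [hAb, hhb] with ω h1 h2
      rw [Pi.mul_apply, norm_mul]
      exact mul_le_mul h1 h2 (norm_nonneg _) (le_trans (norm_nonneg _) h1)
    have hmul : μ[A * h | ℱ n] =ᵐ[μ] A * μ[h | ℱ n] :=
      condExp_mul_of_stronglyMeasurable_left hAm hAh_int hh_int
    -- conditional bound on h
    set q : Ω → ℝ := fun ω => 1 + (l * X (n + 1) ω + d * (X (n + 1) ω) ^ 2) with hq
    have hq23_int : Integrable (fun ω => l * X (n + 1) ω + d * (X (n + 1) ω) ^ 2) μ :=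
      ((hXint (n + 1)).const_mul l).add ((hX2int (n + 1)).const_mul d)
    have hq_int : Integrable q μ := (integrable_const 1).add hq23_int
    have h_le_q : h ≤ᵐ[μ] q := by
      filter_upwards [hlXb] with ω hω
      have h1 := exp_le_quad hω
      have h2 : e2 * (l * X (n + 1) ω) ^ 2 = d * (X (n + 1) ω) ^ 2 := by
        rw [hd]; ring
      simp only [hh, hq]
      rw [← he2] at h1
      linarith
    have hX0 : μ[X (n + 1) | ℱ n] =ᵐ[μ] 0 := by
      have := hmds (n + 1) (Nat.le_add_left 1 n)
      simpa only [Nat.add_sub_cancel] using this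
    have hq_ce : μ[q | ℱ n] =ᵐ[μ] fun ω => 1 + d * g ω := by
      have e0 : μ[q | ℱ n] =ᵐ[μ]
          μ[(fun _ => (1:ℝ)) | ℱ n] + μ[(fun ω => l * X (n + 1) ω + d * (X (n + 1) ω) ^ 2) | ℱ n] :=
        condExp_add (integrable_const 1) hq23_int (ℱ n)
      have e1 : μ[(fun ω => l * X (n + 1) ω + d * (X (n + 1) ω) ^ 2) | ℱ n] =ᵐ[μ]
          μ[(fun ω => l * X (n + 1) ω) | ℱ n] + μ[(fun ω => d * (X (n + 1) ω) ^ 2) | ℱ n] :=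
        condExp_add ((hXint (n + 1)).const_mul l) ((hX2int (n + 1)).const_mul d) (ℱ n)
      have e2' : μ[(fun ω => l * X (n + 1) ω) | ℱ n] =ᵐ[μ] l • μ[X (n + 1) | ℱ n] :=
        condExp_smul l (X (n + 1)) (ℱ n)
      have e3 : μ[(fun ω => d * (X (n + 1) ω) ^ 2) | ℱ n] =ᵐ[μ]
          d • μ[(fun ω => (X (n + 1) ω) ^ 2) | ℱ n] :=
        condExp_smul d (fun ω => (X (n + 1) ω) ^ 2) (ℱ n)
      filter_upwards [e0, e1, e2', e3, hX0] with ω w0 w1 w2 w3 w4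
      simp only [Pi.add_apply, Pi.smul_apply, Pi.zero_apply, smul_eq_mul,
        condExp_const (ℱ.le n)] at w0 w1 w2 w3 w4
      rw [w0, w1, w2, w3, w4, hg]
      ring
    have hcond : μ[h | ℱ n] ≤ᵐ[μ] fun ω => Real.exp (d * g ω) := by
      have hmono := condExp_mono (m := ℱ n) hh_int hq_int h_le_q
      filter_upwards [hmono, hq_ce] with ω w1 w2
      calc (μ[h | ℱ n]) ω ≤ (μ[q | ℱ n]) ω := w1
        _ = 1 + d * g ω := w2
        _ ≤ Real.exp (d * g ω) := by linarith [Real.add_one_le_exp (d * g ω)]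
    -- conclude
    rw [hdecomp]
    refine hmul.trans_le ?_
    filter_upwards [hcond] with ω w1
    have : A ω * (μ[h | ℱ n]) ω ≤ A ω * Real.exp (d * g ω) :=
      mul_le_mul_of_nonneg_left w1 (hApos ω)
    calc (A * μ[h | ℱ n]) ω ≤ A ω * Real.exp (d * g ω) := this
      _ = M n ω * Real.exp (-d * g ω + d * g ω) := by
          rw [Real.exp_add]; simp [hA, mul_assoc]
      _ = M n ω := by rw [neg_mul, neg_add_cancel, Real.exp_zero, mul_one]
  have hMadp : StronglyAdapted ℱ M := hMm
  have hsuper : Supermartingale M ℱ μ := supermartingale_nat hMadp hMint hstep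
  -- Ville
  have hε : (0:ℝ) < 1 / δ := by positivity
  have hM0 : ∫ ω, M 0 ω ∂μ = 1 := by
    have : M 0 = fun _ => 1 := by
      funext ω
      simp [hM, hS, hV, Finset.Icc_eq_empty (by norm_num : ¬ (1:ℕ) ≤ 0)]
    rw [this]; simp
  have hville := ville_ineq hsuper (fun n ω => (Real.exp_pos _).le) hε
  rw [hM0] at hville
  have hville' : μ {ω | ∃ k, 1 / δ ≤ M k ω} ≤ ENNReal.ofReal δ := by
    refine hville.trans_eq ?_
    rw [one_div_one_div]
  -- complement
  set B : Set Ω := {ω | ∃ k, 1 / δ ≤ M k ω} with hB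
  have hBmeas : MeasurableSet B := by
    have : B = ⋃ k, {ω | 1 / δ ≤ M k ω} := by ext ω; simp [hB]
    rw [this]
    exact MeasurableSet.iUnion fun k =>
      measurableSet_le measurable_const ((hMm k).measurable.le (ℱ.le k))
  have hsub : Bᶜ ⊆ {ω | ∀ n : ℕ, ∑ t ∈ Finset.Icc 1 n, X t ω <
      (Real.exp 1 - 2) * l *
        ∑ t ∈ Finset.Icc 1 n, (μ[fun ω' => (X t ω') ^ 2 | ℱ (t - 1)]) ω +
        (1 / l) * Real.log (1 / δ)} := by
    intro ω hω n
    have hlt : M n ω < 1 / δ := lt_of_not_ge fun h => hω ⟨n, h⟩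
    have : l * S n ω - e2 * l ^ 2 * V n ω < Real.log (1 / δ) := by
      refine Real.exp_lt_exp.1 ?_
      rw [Real.exp_log hε]
      exact hlt
    have hgoal : S n ω < e2 * l * V n ω + (1 / l) * Real.log (1 / δ) := by
      have h2 : l * S n ω < l * (e2 * l * V n ω + (1 / l) * Real.log (1 / δ)) := by
        have : l * ((1 / l) * Real.log (1 / δ)) = Real.log (1 / δ) := by
          field_simp
        nlinarith [this]
      exact lt_of_mul_lt_mul_left h2 hl.le
    simpa [hS, hV, he2] using hgoal
  calc ENNReal.ofReal (1 - δ) ≤ 1 - ENNReal.ofReal δ := by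
        refine ENNReal.le_sub_of_add_le_right ENNReal.ofReal_ne_top ?_
        rw [← ENNReal.ofReal_add (by linarith) hδ0.le, sub_add_cancel]
        simp
    _ ≤ 1 - μ B := tsub_le_tsub_left hville' 1
    _ = μ Bᶜ := (prob_compl_eq_one_sub hBmeas).symm
    _ ≤ _ := measure_mono hsub
end

section
/- Let {X_h^k} (k ∈ ℕ, h ∈ {1,…,H}) be nonnegative random variables adapted to a filtration {F_h^k} (ordered lexicographically in (k,h)), and let c > 0 be a constant. Define J_{H+1}^k := 0 and J_h^k := min(X_h^k + E[J_{h+1}^k | F_h^k], c) for h = H down to 1. Then for any δ ∈ (0,1], with probability at least 1-δ, simultaneously for all K ∈ ℕ: Σ_{k=1}^K J_1^k ≤ 2·Σ_{k=1}^K Σ_{h=1}^H X_h^k + 6c·log(2/δ). -/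
open MeasureTheory ProbabilityTheory Real

lemma key_ineq {c x m : ℝ} (hc : 0 < c) (hx : 0 ≤ x) (hm0 : 0 ≤ m) (hmc : m ≤ c) :
    Real.exp (-(x / c)) * (1 - m / (2 * c)) ≤ 1 - min (x + m) c / (2 * c) := by
  have hcx : 0 < c + x := by linarith
  have h2c : (0:ℝ) < 2 * c := by linarith
  have h1 : x / c + 1 ≤ Real.exp (x / c) := Real.add_one_le_exp _
  have hpos : (0:ℝ) < x / c + 1 := by positivity
  have hexp : Real.exp (-(x / c)) ≤ c / (c + x) := by
    rw [Real.exp_neg]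
    have he : c / (c + x) = (x / c + 1)⁻¹ := by
      have hxc : x / c + 1 = (c + x) / c := by field_simp; ring
      rw [hxc, inv_div]
    rw [he]
    exact inv_anti₀ hpos h1
  have hfac : 0 ≤ 1 - m / (2 * c) := by
    rw [sub_nonneg, div_le_one h2c]; linarith
  have hmain : Real.exp (-(x/c)) * (1 - m / (2*c)) ≤ c / (c + x) * (1 - m / (2*c)) :=
    mul_le_mul_of_nonneg_right hexp hfac
  refine hmain.trans ?_
  rcases le_total (x + m) c with hcase | hcase
  · rw [min_eq_left hcase]
    have hid : 1 - (x + m) / (2*c) - c / (c + x) * (1 - m / (2*c))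
        = x * (c - (x + m)) / ((c + x) * (2*c)) := by
      field_simp
      ring
    nlinarith [div_nonneg (mul_nonneg hx (sub_nonneg.2 hcase)) (le_of_lt (mul_pos hcx h2c))]
  · rw [min_eq_right hcase]
    have hne : (0:ℝ) < 2 * c - m := by linarith
    have h2 : c / (c + x) ≤ c / (2 * c - m) := by
      apply div_le_div_of_nonneg_left hc.le hne (by linarith)
    have h3 : c / (2 * c - m) * (1 - m / (2 * c)) = 1 - c / (2 * c) := by
      rw [div_mul_eq_mul_div, div_eq_iff hne.ne']
      field_simp
      ring
    calc c / (c + x) * (1 - m / (2*c)) ≤ c / (2*c - m) * (1 - m / (2*c)) :=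
          mul_le_mul_of_nonneg_right h2 hfac
      _ = 1 - c / (2*c) := h3

theorem clipped_sum_lemma
    {Ω : Type*} {m0 : MeasurableSpace Ω} {μ : Measure Ω} [IsProbabilityMeasure μ]
    (H : ℕ) (hH : 1 ≤ H)
    (F : ℕ → ℕ → MeasurableSpace Ω)
    (hle : ∀ k h, F k h ≤ m0)
    (hmono : ∀ k h, F k h ≤ F k (h + 1))
    (hlink : ∀ k, F k (H + 1) = F (k + 1) 1)
    (X : ℕ → ℕ → Ω → ℝ)
    (hXnonneg : ∀ k h ω, 0 ≤ X k h ω)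
    (hXadapted : ∀ k h, StronglyMeasurable[F k h] (X k h))
    (c : ℝ) (hc : 0 < c)
    (J : ℕ → ℕ → Ω → ℝ)
    (hJtop : ∀ k ω, J k (H + 1) ω = 0)
    (hJ : ∀ k, ∀ h ∈ Finset.Icc 1 H,
      J k h =ᵐ[μ] fun ω => min (X k h ω + (μ[J k (h + 1) | F k h]) ω) c) :
    ∀ δ : ℝ, δ ∈ Set.Ioc (0 : ℝ) 1 →
      ENNReal.ofReal (1 - δ) ≤
        μ {ω | ∀ K : ℕ, ∑ k ∈ Finset.Icc 1 K, J k 1 ω ≤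
            2 * ∑ k ∈ Finset.Icc 1 K, ∑ h ∈ Finset.Icc 1 H, X k h ω +
              6 * c * Real.log (2 / δ)} := by
  have h2c : (0:ℝ) < 2 * c := by linarith
  -- monotonicity of the filtration in h
  have hFh : ∀ k, Monotone (F k) := fun k => monotone_nat_of_le_succ (hmono k)
  -- monotonicity of k ↦ F k 1
  have hF1succ : ∀ k, F k 1 ≤ F (k + 1) 1 := fun k =>
    le_of_le_of_eq (hFh k (by omega : 1 ≤ H + 1)) (hlink k)
  have hF1 : Monotone (fun k => F k 1) := monotone_nat_of_le_succ hF1succ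
  -- the main backward induction
  have main : ∀ k d h, 1 ≤ h → h + d = H + 1 →
      ((∀ᵐ ω ∂μ, 0 ≤ J k h ω ∧ J k h ω ≤ c) ∧ Integrable (J k h) μ ∧
        (μ[(fun ω => Real.exp (-((∑ h' ∈ Finset.Icc h H, X k h' ω) / c))) | F k h]
          ≤ᵐ[μ] fun ω => 1 - J k h ω / (2 * c))) := by
    intro k d
    induction d with
    | zero =>
      intro h h1 hsum
      have hh : h = H + 1 := by omega
      subst hh
      have hJ0 : J k (H+1) = fun _ => (0:ℝ) := funext (hJtop k)
      refine ⟨Filter.Eventually.of_forall fun ω => by simp [hJ0, hc.le], by simp [hJ0], ?_⟩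
      have hIcc : Finset.Icc (H+1) H = ∅ := by
        apply Finset.Icc_eq_empty; omega
      have hfun : (fun ω => Real.exp (-((∑ h' ∈ Finset.Icc (H+1) H, X k h' ω) / c)))
          = fun _ => (1:ℝ) := by
        funext ω; simp [hIcc]
      rw [hfun, condExp_const (hle k (H+1))]
      refine Filter.Eventually.of_forall fun ω => ?_
      simp [hJ0]
    | succ d ih =>
      intro h h1 hsum
      have hhH : h ≤ H := by omega
      obtain ⟨hb', hint', hm'⟩ := ih (h+1) (by omega) (by omega)
      set m := μ[J k (h+1) | F k h] with hm_def
      have hm0 : (0:Ω → ℝ) ≤ᵐ[μ] m := condExp_nonneg (hb'.mono fun ω hω => hω.1)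
      have hmc : m ≤ᵐ[μ] fun _ => c := by
        have h' := condExp_mono (m := F k h) hint' (integrable_const c)
          (hb'.mono fun ω hω => hω.2)
        rwa [condExp_const (hle k h)] at h'
      have hJk := hJ k h (Finset.mem_Icc.2 ⟨h1, hhH⟩)
      have hbJ : ∀ᵐ ω ∂μ, 0 ≤ J k h ω ∧ J k h ω ≤ c := by
        filter_upwards [hJk, hm0] with ω hω hω0
        rw [hω]
        refine ⟨le_min (by simp at hω0; nlinarith [hXnonneg k h ω]) hc.le, min_le_right _ _⟩
      have hintJ : Integrable (J k h) μ := by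
        have hmeas : AEStronglyMeasurable (fun ω => min (X k h ω + m ω) c) μ :=
          ((((hXadapted k h).mono (hle k h)).add
            (stronglyMeasurable_condExp.mono (hle k h))).inf
              stronglyMeasurable_const).aestronglyMeasurable
        have hg : Integrable (fun ω => min (X k h ω + m ω) c) μ := by
          refine Integrable.mono' ((integrable_const c).add
            (integrable_condExp (f := J k (h+1)) (m := F k h)).abs) hmeas ?_
          refine Filter.Eventually.of_forall fun ω => ?_
          simp only [Pi.add_apply, Pi.abs_apply]
          rw [Real.norm_eq_abs, abs_le]
          constructor
          · have h2' : min (m ω) c ≤ min (X k h ω + m ω) c :=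
              min_le_min (by nlinarith [hXnonneg k h ω]) le_rfl
            have h3' : -|m ω| ≤ min (m ω) c := le_min (neg_abs_le _) (by nlinarith [abs_nonneg (m ω)])
            nlinarith [abs_nonneg (m ω)]
          · nlinarith [min_le_right (X k h ω + m ω) c, abs_nonneg (m ω)]
        exact hg.congr hJk.symm
      refine ⟨hbJ, hintJ, ?_⟩
      set XH : Ω → ℝ := fun ω => Real.exp (-(X k h ω / c)) with hXH_def
      set E1 : Ω → ℝ := fun ω => Real.exp (-((∑ h' ∈ Finset.Icc (h+1) H, X k h' ω) / c))
        with hE1_def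
      have hsplit : (fun ω => Real.exp (-((∑ h' ∈ Finset.Icc h H, X k h' ω) / c))) = XH * E1 := by
        funext ω
        have hins : Finset.Icc h H = insert h (Finset.Icc (h+1) H) := by
          ext a; simp only [Finset.mem_Icc, Finset.mem_insert]; omega
        rw [hins, Finset.sum_insert (by simp)]
        simp only [Pi.mul_apply, hXH_def, hE1_def]
        rw [← Real.exp_add]; ring_nf
      have hXHSM : StronglyMeasurable[F k h] XH := by
        have hlin : XH = fun ω => Real.exp ((-c⁻¹) * X k h ω) := by
          funext ω; rw [hXH_def]; ring_nf
        rw [hlin]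
        exact Real.continuous_exp.comp_stronglyMeasurable ((hXadapted k h).const_mul _)
      have hXH_le_one : ∀ ω, XH ω ≤ 1 := fun ω =>
        Real.exp_le_one_iff.mpr (by
          rw [neg_nonpos]
          exact div_nonneg (hXnonneg k h ω) hc.le)
      have hE1_le_one : ∀ ω, E1 ω ≤ 1 := fun ω =>
        Real.exp_le_one_iff.mpr (by
          rw [neg_nonpos]
          have := Finset.sum_nonneg (fun h' _ => hXnonneg k h' ω)
            (s := Finset.Icc (h+1) H)
          positivity)
      have hE1SM : StronglyMeasurable (E1 : Ω → ℝ) := by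
        have hrw : E1 = fun ω => Real.exp (-((∑ h' ∈ Finset.Icc (h+1) H, X k h' ω) * c⁻¹)) := by
          funext ω; simp only [hE1_def]; rw [div_eq_mul_inv]
        rw [hrw]
        exact Real.continuous_exp.comp_stronglyMeasurable
          ((Finset.stronglyMeasurable_fun_sum _ fun h' _ =>
            (hXadapted k h').mono (hle k h')).mul_const c⁻¹).neg
      have hE1int : Integrable E1 μ := by
        refine Integrable.mono' (integrable_const 1) hE1SM.aestronglyMeasurable ?_
        exact Filter.Eventually.of_forall fun ω => by
          rw [Real.norm_eq_abs, abs_of_pos (Real.exp_pos _)]; exact hE1_le_one ω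
      have hprodint : Integrable (XH * E1) μ := by
        refine Integrable.bdd_mul hE1int (hXHSM.mono (hle k h)).aestronglyMeasurable (c := 1) (Filter.Eventually.of_forall fun ω => ?_)
        rw [Real.norm_eq_abs, abs_of_pos (Real.exp_pos _)]; exact hXH_le_one ω
      have hgfun : Integrable (XH * fun ω => 1 - J k (h+1) ω / (2*c)) μ := by
        refine Integrable.bdd_mul ((integrable_const 1).sub (hint'.div_const (2*c)))
          (hXHSM.mono (hle k h)).aestronglyMeasurable (c := 1) (Filter.Eventually.of_forall fun ω => ?_)
        rw [Real.norm_eq_abs, abs_of_pos (Real.exp_pos _)]; exact hXH_le_one ω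
      have c1 : μ[XH * E1 | F k (h+1)] =ᵐ[μ] XH * μ[E1 | F k (h+1)] :=
        condExp_mul_of_stronglyMeasurable_left (hXHSM.mono (hmono k h)) hprodint hE1int
      have c3 : XH * μ[E1 | F k (h+1)] ≤ᵐ[μ] XH * fun ω => 1 - J k (h+1) ω / (2*c) := by
        filter_upwards [hm'] with ω hω
        simp only [Pi.mul_apply]
        exact mul_le_mul_of_nonneg_left hω (Real.exp_pos _).le
      have c4 : μ[XH * E1 | F k h] ≤ᵐ[μ]
          μ[XH * fun ω => 1 - J k (h+1) ω / (2*c) | F k h] := by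
        refine ((condExp_condExp_of_le (hmono k h) (hle k (h+1))).symm.le).trans ?_
        exact condExp_mono integrable_condExp hgfun (c1.trans_le c3)
      have c5 : μ[XH * fun ω => 1 - J k (h+1) ω / (2*c) | F k h]
          =ᵐ[μ] XH * μ[fun ω => 1 - J k (h+1) ω / (2*c) | F k h] :=
        condExp_mul_of_stronglyMeasurable_left hXHSM hgfun
          ((integrable_const 1).sub (hint'.div_const _))
      have c6 : μ[fun ω => 1 - J k (h+1) ω / (2*c) | F k h] =ᵐ[μ] fun ω => 1 - m ω / (2*c) := by
        have hsubf : (fun ω => 1 - J k (h+1) ω / (2*c))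
            = (fun _ => (1:ℝ)) - (2*c)⁻¹ • J k (h+1) := by
          funext ω
          simp only [Pi.sub_apply, Pi.smul_apply, smul_eq_mul]
          ring
        rw [hsubf]
        refine (condExp_sub (integrable_const 1) (hint'.smul ((2*c)⁻¹)) (F k h)).trans ?_
        rw [condExp_const (hle k h)]
        refine (Filter.EventuallyEq.sub Filter.EventuallyEq.rfl
          (condExp_smul ((2*c)⁻¹) (J k (h+1)) (F k h))).trans ?_
        refine Filter.Eventually.of_forall fun ω => ?_
        simp only [Pi.sub_apply, Pi.smul_apply, smul_eq_mul]
        rw [← hm_def]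
        ring
      have c7 : XH * (fun ω => 1 - m ω / (2*c)) ≤ᵐ[μ] fun ω => 1 - J k h ω / (2*c) := by
        filter_upwards [hm0, hmc, hJk] with ω hw0 hw1 hw2
        simp only [Pi.mul_apply, hXH_def]
        rw [hw2]
        exact key_ineq hc (hXnonneg k h ω) hw0 hw1
      rw [hsplit]
      exact c4.trans ((c5.trans (Filter.EventuallyEq.rfl.mul c6)).le.trans c7)
  intro δ hδ
  -- measurable version of J k 1, and per-episode sums
  set M : ℕ → Ω → ℝ := fun k ω => min (X k 1 ω + (μ[J k 2 | F k 1]) ω) c with hM_def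
  have hM_eq : ∀ k, J k 1 =ᵐ[μ] M k := fun k => hJ k 1 (Finset.mem_Icc.2 ⟨le_rfl, hH⟩)
  have hMSM : ∀ k, StronglyMeasurable[F k 1] (M k) := fun k => by
    have h1 : StronglyMeasurable[F k 1] (fun ω => X k 1 ω + (μ[J k 2 | F k 1]) ω) :=
      (hXadapted k 1).add stronglyMeasurable_condExp
    exact (continuous_id.min continuous_const).comp_stronglyMeasurable h1
  have hM_le : ∀ k ω, M k ω ≤ c := fun k ω => min_le_right _ _
  set S : ℕ → Ω → ℝ := fun k ω => ∑ h ∈ Finset.Icc 1 H, X k h ω with hS_def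
  have hS_nonneg : ∀ k ω, 0 ≤ S k ω := fun k ω => Finset.sum_nonneg fun h _ => hXnonneg k h ω
  have hSSM : ∀ k, StronglyMeasurable[F (k+1) 1] (S k) := fun k => by
    rw [← hlink k]
    refine Finset.stronglyMeasurable_fun_sum _ fun h hmem => (hXadapted k h).mono (hFh k ?_)
    simp only [Finset.mem_Icc] at hmem; omega
  set 𝒢 : Filtration ℕ m0 :=
    { seq := fun k => F (k+1) 1
      mono' := fun i j hij => hF1 (by omega : i + 1 ≤ j + 1)
      le' := fun k => hle (k+1) 1 } with h𝒢_def
  set W : ℕ → Ω → ℝ := fun K ω =>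
    Real.exp (∑ k ∈ Finset.Icc 1 K, (M k ω / (2*c) - S k ω / c)) with hW_def
  have hterm_le : ∀ k ω, M k ω / (2*c) - S k ω / c ≤ 1/2 := fun k ω => by
    have h1 : M k ω / (2*c) ≤ 1/2 := by rw [div_le_iff₀ h2c]; nlinarith [hM_le k ω]
    have h2 : 0 ≤ S k ω / c := div_nonneg (hS_nonneg k ω) hc.le
    linarith
  have hWpos : ∀ K ω, 0 < W K ω := fun K ω => Real.exp_pos _
  have hW_le : ∀ K ω, W K ω ≤ Real.exp ((K:ℝ) * (1/2)) := fun K ω => by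
    apply Real.exp_le_exp.mpr
    calc ∑ k ∈ Finset.Icc 1 K, (M k ω / (2*c) - S k ω / c)
        ≤ ∑ _k ∈ Finset.Icc 1 K, (1/2 : ℝ) := Finset.sum_le_sum fun k _ => hterm_le k ω
      _ = (K:ℝ) * (1/2) := by rw [Finset.sum_const, Nat.card_Icc]; simp
  have hWSM : ∀ K, StronglyMeasurable[𝒢 K] (W K) := fun K => by
    apply Real.continuous_exp.comp_stronglyMeasurable
    refine Finset.stronglyMeasurable_fun_sum _ fun k hk => ?_
    have hkK : k ≤ K := (Finset.mem_Icc.1 hk).2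
    have hrw : (fun ω => M k ω / (2*c) - S k ω / c)
        = fun ω => M k ω * (2*c)⁻¹ - S k ω * c⁻¹ := by
      funext ω; rw [div_eq_mul_inv, div_eq_mul_inv]
    rw [hrw]
    exact (((hMSM k).mono (hF1 (by omega : k ≤ K + 1))).mul_const _).sub
      (((hSSM k).mono (hF1 (by omega : k + 1 ≤ K + 1))).mul_const _)
  have hWint : ∀ K, Integrable (W K) μ := fun K => by
    refine Integrable.mono' (integrable_const (Real.exp ((K:ℝ) * (1/2))))
      ((hWSM K).mono (hle (K+1) 1)).aestronglyMeasurable ?_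
    exact Filter.Eventually.of_forall fun ω => by
      rw [Real.norm_eq_abs, abs_of_pos (hWpos K ω)]; exact hW_le K ω
  have hsuper : Supermartingale W 𝒢 μ := by
    refine supermartingale_nat (fun K => hWSM K) hWint ?_
    intro K
    set A : Ω → ℝ := fun ω => W K ω * Real.exp (M (K+1) ω / (2*c)) with hA_def
    set g : Ω → ℝ := fun ω => Real.exp (-(S (K+1) ω / c)) with hg_def
    have hg_le_one : ∀ ω, g ω ≤ 1 := fun ω => Real.exp_le_one_iff.mpr (by
      rw [neg_nonpos]; exact div_nonneg (hS_nonneg (K+1) ω) hc.le)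
    have hsplitW : W (K+1) = A * g := by
      funext ω
      simp only [hW_def, hA_def, hg_def, Pi.mul_apply]
      rw [Finset.sum_Icc_succ_top (by omega : 1 ≤ K+1), ← Real.exp_add, ← Real.exp_add]
      congr 1
      ring
    have hASM : StronglyMeasurable[𝒢 K] A := by
      refine (hWSM K).mul ?_
      have hrw : (fun ω => Real.exp (M (K+1) ω / (2*c)))
          = fun ω => Real.exp (M (K+1) ω * (2*c)⁻¹) := by
        funext ω; rw [div_eq_mul_inv]
      rw [hrw]
      exact Real.continuous_exp.comp_stronglyMeasurable ((hMSM (K+1)).mul_const _)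
    have hgSM : StronglyMeasurable g := by
      have hrw : g = fun ω => Real.exp (-(S (K+1) ω * c⁻¹)) := by
        funext ω; simp only [hg_def]; rw [div_eq_mul_inv]
      rw [hrw]
      exact Real.continuous_exp.comp_stronglyMeasurable
        (((hSSM (K+1)).mono (hle (K+2) 1)).mul_const _).neg
    have hgint : Integrable g μ := by
      refine Integrable.mono' (integrable_const 1) hgSM.aestronglyMeasurable ?_
      exact Filter.Eventually.of_forall fun ω => by
        rw [Real.norm_eq_abs, abs_of_pos (Real.exp_pos _)]; exact hg_le_one ω
    have hAgint : Integrable (A * g) μ := hsplitW ▸ hWint (K+1)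
    have c1 : μ[W (K+1) | 𝒢 K] =ᵐ[μ] A * μ[g | 𝒢 K] := by
      rw [hsplitW]
      exact condExp_mul_of_stronglyMeasurable_left hASM hAgint hgint
    have c2 : μ[g | 𝒢 K] ≤ᵐ[μ] fun ω => Real.exp (-(M (K+1) ω / (2*c))) := by
      have hmain := (main (K+1) H 1 le_rfl (by omega)).2.2
      have hmain' : μ[g | 𝒢 K] ≤ᵐ[μ] fun ω => 1 - J (K+1) 1 ω / (2*c) := hmain
      filter_upwards [hmain', hM_eq (K+1)] with ω hω hMω
      refine hω.trans ?_
      rw [hMω]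
      have := Real.add_one_le_exp (-(M (K+1) ω / (2*c)))
      linarith
    have c3 : A * μ[g | 𝒢 K] ≤ᵐ[μ] W K := by
      filter_upwards [c2] with ω hω
      simp only [Pi.mul_apply, hA_def]
      have hA_nonneg : 0 ≤ W K ω * Real.exp (M (K+1) ω / (2*c)) :=
        mul_nonneg (hWpos K ω).le (Real.exp_pos _).le
      calc W K ω * Real.exp (M (K+1) ω / (2*c)) * (μ[g | 𝒢 K]) ω
          ≤ W K ω * Real.exp (M (K+1) ω / (2*c)) * Real.exp (-(M (K+1) ω / (2*c))) :=
            mul_le_mul_of_nonneg_left hω hA_nonneg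
        _ = W K ω := by rw [mul_assoc, ← Real.exp_add]; simp
    exact c1.trans_le c3
  -- Ville's inequality
  obtain ⟨hδ0, hδ1⟩ := hδ
  have hεpos : (0:ℝ) < 1/δ := by positivity
  set Aset : ℕ → Set Ω := fun n => {ω | ∃ k ≤ n, 1/δ ≤ W k ω} with hAset_def
  have hAmeas : ∀ n, MeasurableSet (Aset n) := fun n => by
    have hrw : Aset n = ⋃ k ∈ Set.Iic n, {ω | 1/δ ≤ W k ω} := by
      ext ω; simp [hAset_def]
    rw [hrw]
    exact MeasurableSet.biUnion (Set.to_countable _) fun k _ =>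
      measurableSet_le measurable_const ((hWSM k).mono (hle (k+1) 1)).measurable
  have hW0 : W 0 = fun _ => (1:ℝ) := by
    funext ω; simp [hW_def]
  have hVille : ∀ n, μ (Aset n) ≤ ENNReal.ofReal δ := by
    intro n
    set τ : Ω → WithTop ℕ := fun ω => ((hittingBtwn W (Set.Ici (1/δ)) 0 n ω : ℕ) : WithTop ℕ) with hτ_def
    have hτstop : IsStoppingTime 𝒢 τ := hsuper.stronglyAdapted.adapted.isStoppingTime_hittingBtwn measurableSet_Ici
    have hτle : ∀ ω, τ ω ≤ n := fun ω => WithTop.coe_le_coe.mpr (hittingBtwn_le ω)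
    have hsub : Submartingale (-W) 𝒢 μ := hsuper.neg
    have hτint : Integrable (stoppedValue W τ) μ := by
      have := (hsub.integrable_stoppedValue hτstop hτle).neg
      refine this.congr (Filter.Eventually.of_forall fun ω => ?_)
      simp [stoppedValue]
    have hexp_stop : μ[stoppedValue W τ] ≤ 1 := by
      have h0 : ∫ x, stoppedValue (-W) (fun _ => ((0:ℕ) : WithTop ℕ)) x ∂μ ≤ ∫ x, stoppedValue (-W) τ x ∂μ :=
        hsub.expected_stoppedValue_mono (isStoppingTime_const 𝒢 0) hτstop
        (fun ω => WithTop.coe_le_coe.mpr (Nat.zero_le _)) hτle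
      have e1 : stoppedValue (-W) (fun _ => ((0:ℕ) : WithTop ℕ)) = fun ω => -(W 0 ω) := rfl
      have e2 : stoppedValue (-W) τ = fun ω => -(stoppedValue W τ ω) := rfl
      rw [e1, e2, integral_neg, integral_neg, neg_le_neg_iff] at h0
      refine le_trans h0 ?_
      rw [hW0]
      simp
    have hge : ∀ ω ∈ Aset n, 1/δ ≤ stoppedValue W τ ω := by
      intro ω hω
      obtain ⟨k, hk, hWk⟩ := hω
      exact stoppedValue_hittingBtwn_mem ⟨k, ⟨Nat.zero_le _, hk⟩, hWk⟩
    have h1 : 1/δ * (μ (Aset n)).toReal ≤ ∫ ω in Aset n, stoppedValue W τ ω ∂μ :=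
      by have := setIntegral_ge_of_const_le (hAmeas n) (measure_ne_top μ _) hge hτint.integrableOn
         rw [smul_eq_mul, mul_comm] at this; exact this
    have h2 : ∫ ω in Aset n, stoppedValue W τ ω ∂μ ≤ μ[stoppedValue W τ] :=
      setIntegral_le_integral hτint (Filter.Eventually.of_forall fun ω => (hWpos _ ω).le)
    have htoReal : (μ (Aset n)).toReal ≤ δ := by
      have hchain := h1.trans (h2.trans hexp_stop)
      have ht0 : 0 ≤ (μ (Aset n)).toReal := ENNReal.toReal_nonneg
      have h3 : δ * (1/δ * (μ (Aset n)).toReal) ≤ δ * 1 :=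
        mul_le_mul_of_nonneg_left hchain hδ0.le
      have h4 : δ * (1/δ * (μ (Aset n)).toReal) = (μ (Aset n)).toReal := by
        field_simp
      linarith
    rw [← ENNReal.ofReal_toReal (measure_ne_top μ (Aset n))]
    exact ENNReal.ofReal_le_ofReal htoReal
  have hAmono : Monotone Aset := fun i j hij ω hω => by
    obtain ⟨k, hk, hw⟩ := hω; exact ⟨k, hk.trans hij, hw⟩
  have hμA : μ (⋃ n, Aset n) ≤ ENNReal.ofReal δ := by
    rw [hAmono.directed_le.measure_iUnion]
    exact iSup_le hVille
  have hcompl : ENNReal.ofReal (1-δ) ≤ μ (⋃ n, Aset n)ᶜ := by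
    rw [prob_compl_eq_one_sub (MeasurableSet.iUnion hAmeas)]
    refine ENNReal.le_sub_of_add_le_right (measure_ne_top μ _) ?_
    calc ENNReal.ofReal (1-δ) + μ (⋃ n, Aset n)
        ≤ ENNReal.ofReal (1-δ) + ENNReal.ofReal δ := add_le_add le_rfl hμA
      _ = ENNReal.ofReal 1 := by
          rw [← ENNReal.ofReal_add (by linarith) hδ0.le]
          norm_num
      _ ≤ 1 := by simp
  have hane : μ {ω | ∀ k, J k 1 ω = M k ω}ᶜ = 0 := by
    rw [Set.compl_setOf]
    exact ae_iff.1 (ae_all_iff.2 fun k => hM_eq k)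
  refine le_trans hcompl ?_
  have hsubset : (⋃ n, Aset n)ᶜ ∩ {ω | ∀ k, J k 1 ω = M k ω} ⊆
      {ω | ∀ K : ℕ, ∑ k ∈ Finset.Icc 1 K, J k 1 ω ≤
        2 * ∑ k ∈ Finset.Icc 1 K, S k ω + 6 * c * Real.log (2 / δ)} := by
    rintro ω ⟨hωA, hωJ⟩ K
    have hWK : W K ω < 1/δ := by
      by_contra hcon
      push_neg at hcon
      exact hωA (Set.mem_iUnion.2 ⟨K, ⟨K, le_rfl, hcon⟩⟩)
    have hlogW : Real.log (W K ω) = ∑ k ∈ Finset.Icc 1 K, (M k ω / (2*c) - S k ω / c) := by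
      simp only [hW_def]
      exact Real.log_exp _
    have hlog : ∑ k ∈ Finset.Icc 1 K, (M k ω / (2*c) - S k ω / c) < Real.log (1/δ) := by
      rw [← hlogW]
      exact Real.log_lt_log (hWpos K ω) hWK
    have hexpand : ∑ k ∈ Finset.Icc 1 K, (M k ω / (2*c) - S k ω / c)
        = (∑ k ∈ Finset.Icc 1 K, M k ω) / (2*c) - (∑ k ∈ Finset.Icc 1 K, S k ω) / c := by
      rw [Finset.sum_sub_distrib, Finset.sum_div, Finset.sum_div]
    have hsum_eq : ∑ k ∈ Finset.Icc 1 K, J k 1 ω = ∑ k ∈ Finset.Icc 1 K, M k ω :=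
      Finset.sum_congr rfl fun k _ => hωJ k
    have hlog1 : Real.log (1/δ) = -Real.log δ := by rw [one_div, Real.log_inv]
    have hlog2 : Real.log (2/δ) = Real.log 2 - Real.log δ :=
      Real.log_div (by norm_num) (ne_of_gt hδ0)
    have hlogδ : c * Real.log δ ≤ 0 :=
      mul_nonpos_of_nonneg_of_nonpos hc.le (Real.log_nonpos hδ0.le hδ1)
    have hlog2' : 0 ≤ c * Real.log 2 := mul_nonneg hc.le (Real.log_nonneg (by norm_num))
    have hM2S : (∑ k ∈ Finset.Icc 1 K, M k ω) - 2 * (∑ k ∈ Finset.Icc 1 K, S k ω)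
        < -Real.log δ * (2*c) := by
      have hmul := mul_lt_mul_of_pos_right (by rw [hexpand, hlog1] at hlog; exact hlog) h2c
      have hid : ((∑ k ∈ Finset.Icc 1 K, M k ω) / (2*c)
          - (∑ k ∈ Finset.Icc 1 K, S k ω) / c) * (2*c)
          = (∑ k ∈ Finset.Icc 1 K, M k ω) - 2 * (∑ k ∈ Finset.Icc 1 K, S k ω) := by
        field_simp
      rwa [hid] at hmul
    rw [Set.mem_setOf_eq] at *
    rw [hsum_eq, hlog2]
    nlinarith [hM2S]
  calc μ (⋃ n, Aset n)ᶜ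
      = μ ((⋃ n, Aset n)ᶜ ∩ {ω | ∀ k, J k 1 ω = M k ω}) := (measure_inter_conull hane).symm
    _ ≤ _ := measure_mono hsubset
end
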